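/- arXiv:0812.3310 — 2 statements merged into one kernel-verified Lean document; each statement's English description precedes it below -/
import Mathlib

section
/- If a traceless complex 3×3 matrix W satisfies the quadratic equation W² - (b/a)·W - (a/3)·I = 0, where a = Tr(W²) ≠ 0 and b = Tr(W³), then 6b² = a³. -/
lemma tr4_aux (M : Matrix (Fin 3) (Fin 3) ℂ) (h : M.trace = 0) :
    (M ^ 4).trace = (M ^ 2).trace ^ 2 / 2 := by
  simp only [Matrix.trace, Matrix.diag, Fin.sum_univ_three, pow_succ, pow_zero, one_mul,
    Matrix.mul_apply] at h ⊢
  have h22 : M 2 2 = -(M 0 0) - M 1 1 := by linear_combination h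
  rw [h22]
  ring

theorem stmt1 (W : Matrix (Fin 3) (Fin 3) ℂ) (htr : W.trace = 0)
    (a b : ℂ) (ha : a = (W ^ 2).trace) (hb : b = (W ^ 3).trace) (ha0 : a ≠ 0)
    (heq : W ^ 2 - (b / a) • W - (a / 3) • (1 : Matrix (Fin 3) (Fin 3) ℂ) = 0) :
    6 * b ^ 2 = a ^ 3 := by
  have hW2 : W ^ 2 = (b / a) • W + (a / 3) • (1 : Matrix (Fin 3) (Fin 3) ℂ) := by
    have h := sub_eq_zero.mp (show W ^ 2 - ((b / a) • W + (a / 3) • (1 : Matrix (Fin 3) (Fin 3) ℂ)) = 0 by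
      rw [← heq]; abel)
    exact h
  have e : W ^ 4 = ((b/a)*(b/a)) • (W * W) + ((b/a)*(a/3)) • W + ((a/3)*(b/a)) • W
      + ((a/3)*(a/3)) • (1 : Matrix (Fin 3) (Fin 3) ℂ) := by
    have h44 : W ^ 4 = W ^ 2 * W ^ 2 := by rw [← pow_add]
    rw [h44, hW2]
    simp only [Matrix.add_mul, Matrix.mul_add, smul_mul_assoc, mul_smul_comm, smul_smul,
      mul_one, one_mul, Matrix.one_mul, Matrix.mul_one]
    module
  have hWW : (W * W).trace = a := by rw [ha, pow_two]
  have h4 : (W ^ 4).trace = (b/a)*(b/a)*a + (a/3)*(a/3)*3 := by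
    rw [e]
    simp [Matrix.trace_add, Matrix.trace_smul, Matrix.trace_one, hWW, htr]
  have h4' := tr4_aux W htr
  rw [h4, ← ha] at h4'
  field_simp at h4'
  have key : a * (6 * b ^ 2) = a * a ^ 3 := by linear_combination a * h4'
  exact mul_left_cancel₀ ha0 key
end

section
/- In the Kerr-NUT coordinates, with u = (2/(x²+y²)²)·(X(dt - y²dz) - Y(dt + x²dz)) and metric g given by the Kerr-NUT line element, the squared norm of u is u² = 4(X - Y)/(x² + y²)³. In particular δU = y·u has (δU)² = 4y²(X - Y)/(x² + y²)³, and with X - Y = -ε(x² + y²) + 2νx + 2μy, σ := 2α/(3λ²-1) - (1/4)(δU)² evaluates (when ν = 0) to εy²/(x² + y²)². -/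
/-- Kerr-NUT metric components in coordinates (t, y, x, z), where
`X = -εx² + 2νx + γ` and `Y = εy² - 2μy + γ`. -/
noncomputable def kerrNUTMetric (x y X Y : ℝ) : Matrix (Fin 4) (Fin 4) ℝ :=
  let Δ : ℝ := y ^ 2 + x ^ 2
  Matrix.of
    ![![(X - Y) / Δ, 0, 0, (-(Y * x ^ 2) - X * y ^ 2) / Δ],
      ![0, Δ / Y, 0, 0],
      ![0, 0, Δ / X, 0],
      ![(-(Y * x ^ 2) - X * y ^ 2) / Δ, 0, 0, (X * y ^ 4 - Y * x ^ 4) / Δ]]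

/-- Components of the 1-form `u = (2/(x²+y²)²)(X(dt - y²dz) - (Y(dt + x²dz))`. -/
noncomputable def kerrNUTu (x y X Y : ℝ) : Fin 4 → ℝ :=
  ![2 * (X - Y) / (y ^ 2 + x ^ 2) ^ 2, 0, 0,
    2 * (-(X * y ^ 2) - Y * x ^ 2) / (y ^ 2 + x ^ 2) ^ 2]

/-- Candidate inverse of the Kerr-NUT metric. -/
noncomputable def kerrNUTMetricInv (x y X Y : ℝ) : Matrix (Fin 4) (Fin 4) ℝ :=
  let Δ : ℝ := y ^ 2 + x ^ 2
  Matrix.of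
    ![![(X * y ^ 4 - Y * x ^ 4) / (-(X * Y) * Δ), 0, 0, (Y * x ^ 2 + X * y ^ 2) / (-(X * Y) * Δ)],
      ![0, Y / Δ, 0, 0],
      ![0, 0, X / Δ, 0],
      ![(Y * x ^ 2 + X * y ^ 2) / (-(X * Y) * Δ), 0, 0, (X - Y) / (-(X * Y) * Δ)]]

set_option maxHeartbeats 1000000 in
theorem stmt18 (t y x z ε ν γ μ : ℝ) (X Y : ℝ)
    (hX : X = -ε * x ^ 2 + 2 * ν * x + γ) (hY : Y = ε * y ^ 2 - 2 * μ * y + γ)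
    (hXpos : X > 0) (hY0 : Y ≠ 0) (hΔ : x ^ 2 + y ^ 2 ≠ 0)
    (hy : y ≠ 0) (h3 : 3 * x ^ 2 ≠ y ^ 2)
    (α : ℝ) (hα : α = (-(((μ : ℂ) + Complex.I * ν)) / ((y : ℂ) + Complex.I * x) ^ 3).re)
    (l : ℝ) (hl : l = x / y)
    (usq : ℝ) (husq : usq = dotProduct ((kerrNUTMetric x y X Y)⁻¹.mulVec (kerrNUTu x y X Y)) (kerrNUTu x y X Y))
    (σ : ℝ) (hσ : σ = 2 * α / (3 * l ^ 2 - 1) - y ^ 2 * usq / 4) :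
    usq = 4 * (X - Y) / (x ^ 2 + y ^ 2) ^ 3 ∧
      (ν = 0 → σ = ε * y ^ 2 / (x ^ 2 + y ^ 2) ^ 2) := by
  have hΔ' : y ^ 2 + x ^ 2 ≠ 0 := by rwa [add_comm] at hΔ
  have hXne : X ≠ 0 := ne_of_gt hXpos
  have hinv : (kerrNUTMetric x y X Y)⁻¹ = kerrNUTMetricInv x y X Y := by
    apply Matrix.inv_eq_right_inv
    ext i j
    fin_cases i <;> fin_cases j <;>
      simp [kerrNUTMetric, kerrNUTMetricInv, Matrix.mul_apply, Fin.sum_univ_four,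
        Matrix.one_apply, Matrix.vecHead, Matrix.vecTail] <;>
      field_simp <;> ring
  have husq' : usq = 4 * (X - Y) / (x ^ 2 + y ^ 2) ^ 3 := by
    rw [husq, hinv]
    simp [kerrNUTMetricInv, kerrNUTu, Matrix.mulVec, dotProduct, Fin.sum_univ_four,
      Matrix.vecHead, Matrix.vecTail]
    field_simp
    ring
  refine ⟨husq', fun hν => ?_⟩
  subst hν
  have hw3 : ((y : ℂ) + Complex.I * x) ^ 3 =
      ⟨y ^ 3 - 3 * y * x ^ 2, 3 * y ^ 2 * x - x ^ 3⟩ := by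
    apply Complex.ext <;> simp [pow_succ, Complex.add_re, Complex.add_im, Complex.mul_re,
      Complex.mul_im] <;> ring
  have hns : (y ^ 3 - 3 * y * x ^ 2) ^ 2 + (3 * y ^ 2 * x - x ^ 3) ^ 2 = (y ^ 2 + x ^ 2) ^ 3 := by
    ring
  have hα' : α = -μ * (y ^ 3 - 3 * y * x ^ 2) / (y ^ 2 + x ^ 2) ^ 3 := by
    rw [hα, hw3, Complex.div_re]
    simp only [Complex.normSq_mk, Complex.neg_re, Complex.neg_im, Complex.add_re,
      Complex.add_im, Complex.mul_re, Complex.mul_im, Complex.I_re, Complex.I_im,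
      Complex.ofReal_re, Complex.ofReal_im]
    rw [show (y ^ 3 - 3 * y * x ^ 2) * (y ^ 3 - 3 * y * x ^ 2) +
        (3 * y ^ 2 * x - x ^ 3) * (3 * y ^ 2 * x - x ^ 3) = (y ^ 2 + x ^ 2) ^ 3 by ring]
    ring
  have h3l : 3 * l ^ 2 - 1 ≠ 0 := by
    rw [hl]
    have h3' : 3 * x ^ 2 - y ^ 2 ≠ 0 := sub_ne_zero.mpr h3
    field_simp
    intro h
    exact h3' ((div_eq_zero_iff.mp h).resolve_right (pow_ne_zero 2 hy))
  have hXY : X - Y = -ε * (x ^ 2 + y ^ 2) + 2 * μ * y := by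
    rw [hX, hY]; ring
  have key : 2 * α / (3 * l ^ 2 - 1) = 2 * μ * y ^ 3 / (y ^ 2 + x ^ 2) ^ 3 := by
    rw [hα', hl]
    have h3' : 3 * x ^ 2 - y ^ 2 ≠ 0 := sub_ne_zero.mpr h3
    rw [show 3 * (x / y) ^ 2 - 1 = (3 * x ^ 2 - y ^ 2) / y ^ 2 by field_simp]
    field_simp
    ring
  rw [hσ, key, husq', hXY]
  field_simp
  ring
end
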